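/- Let (X, μ) be a measure space, δ a positive integer, and let u, W, χ : X → ℝ be measurable functions with |u|^{2δ} ∈ L²(μ), |W|^{2δ} ∈ L²(μ), and W − u, χ ∈ L⁴(μ). Then (W^{2δ+1} − u^{2δ+1})·χ is integrable and | ∫ (W^{2δ+1} − u^{2δ+1})·χ dμ | ≤ 2^{2δ−1}(2δ+1)·( ‖|W|^{2δ}‖_{L²(μ)} + ‖|u|^{2δ}‖_{L²(μ)} )·‖W − u‖_{L⁴(μ)}·‖χ‖_{L⁴(μ)}. -/

import Mathlib

open MeasureTheory

/-- The L^p(μ) norm ‖f‖_{L^p(μ)} = (∫ |f|^p dμ)^{1/p}. -/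
noncomputable def lpNormR {X : Type*} [MeasurableSpace X] (μ : Measure X) (p : ℕ)
    (f : X → ℝ) : ℝ :=
  (∫ x, |f x| ^ p ∂μ) ^ ((1 : ℝ) / p)

lemma aux_pow_mix (x y : ℝ) (hx : 0 ≤ x) (hy : 0 ≤ y) {i m : ℕ} (him : i ≤ m) :
    x ^ i * y ^ (m - i) ≤ x ^ m + y ^ m := by
  rcases le_total x y with h | h
  · have h1 : x ^ i * y ^ (m - i) ≤ y ^ i * y ^ (m - i) := by
      apply mul_le_mul_of_nonneg_right (pow_le_pow_left₀ hx h i) (pow_nonneg hy _)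
    have h2 : y ^ i * y ^ (m - i) = y ^ m := by
      rw [← pow_add]; congr 1; omega
    nlinarith [pow_nonneg hx m]
  · have h1 : x ^ i * y ^ (m - i) ≤ x ^ i * x ^ (m - i) := by
      apply mul_le_mul_of_nonneg_left (pow_le_pow_left₀ hy h _) (pow_nonneg hx _)
    have h2 : x ^ i * x ^ (m - i) = x ^ m := by
      rw [← pow_add]; congr 1; omega
    nlinarith [pow_nonneg hy m]

/-- Mean value theorem style bound: `|a^(m+1) - b^(m+1)| ≤ (m+1)(|a|^m + |b|^m)|a-b|`. -/
lemma abs_pow_succ_sub_pow_succ_le (a b : ℝ) (m : ℕ) :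
    |a ^ (m + 1) - b ^ (m + 1)| ≤ ((m : ℝ) + 1) * ((|a| ^ m + |b| ^ m) * |a - b|) := by
  rw [← geom_sum₂_mul, abs_mul]
  have hsum : |∑ i ∈ Finset.range (m + 1), a ^ i * b ^ (m + 1 - 1 - i)| ≤
      ((m : ℝ) + 1) * (|a| ^ m + |b| ^ m) := by
    calc |∑ i ∈ Finset.range (m + 1), a ^ i * b ^ (m + 1 - 1 - i)|
        ≤ ∑ i ∈ Finset.range (m + 1), |a ^ i * b ^ (m + 1 - 1 - i)| :=
          Finset.abs_sum_le_sum_abs _ _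
      _ ≤ ∑ _i ∈ Finset.range (m + 1), (|a| ^ m + |b| ^ m) := by
          apply Finset.sum_le_sum
          intro i hi
          rw [abs_mul, abs_pow, abs_pow]
          have : m + 1 - 1 - i = m - i := by omega
          rw [this]
          exact aux_pow_mix _ _ (abs_nonneg a) (abs_nonneg b)
            (by simp at hi; omega)
      _ = ((m : ℝ) + 1) * (|a| ^ m + |b| ^ m) := by
          rw [Finset.sum_const, Finset.card_range]; ring
  calc |∑ i ∈ Finset.range (m + 1), a ^ i * b ^ (m + 1 - 1 - i)| * |a - b|
      ≤ ((m : ℝ) + 1) * (|a| ^ m + |b| ^ m) * |a - b| := by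
        apply mul_le_mul_of_nonneg_right hsum (abs_nonneg _)
    _ = ((m : ℝ) + 1) * ((|a| ^ m + |b| ^ m) * |a - b|) := by ring

/-- Paper's estimate (7p11) for the term J₃ of the conforming FEM error analysis:
if |u|^{2δ}, |W|^{2δ} ∈ L²(μ) and W − u, χ ∈ L⁴(μ), then (W^{2δ+1} − u^{2δ+1})·χ is
integrable and
| ∫ (W^{2δ+1} − u^{2δ+1})·χ dμ | ≤
  2^{2δ−1}(2δ+1)·( ‖|W|^{2δ}‖_{L²} + ‖|u|^{2δ}‖_{L²} )·‖W − u‖_{L⁴}·‖χ‖_{L⁴}. -/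
theorem stmt_18 {X : Type*} [MeasurableSpace X] (μ : Measure X)
    (δ : ℕ) (hδ : 0 < δ) (u W χ : X → ℝ)
    (hu : Measurable u) (hW : Measurable W) (hχ : Measurable χ)
    (hu2 : Integrable (fun x => (|u x| ^ (2 * δ)) ^ 2) μ)
    (hW2 : Integrable (fun x => (|W x| ^ (2 * δ)) ^ 2) μ)
    (hWu4 : Integrable (fun x => |W x - u x| ^ 4) μ)
    (hχ4 : Integrable (fun x => |χ x| ^ 4) μ) :
    Integrable (fun x => (W x ^ (2 * δ + 1) - u x ^ (2 * δ + 1)) * χ x) μ ∧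
      |∫ x, (W x ^ (2 * δ + 1) - u x ^ (2 * δ + 1)) * χ x ∂μ| ≤
        2 ^ (2 * δ - 1) * (2 * (δ : ℝ) + 1) *
          (lpNormR μ 2 (fun x => |W x| ^ (2 * δ)) + lpNormR μ 2 (fun x => |u x| ^ (2 * δ))) *
          lpNormR μ 4 (fun x => W x - u x) * lpNormR μ 4 χ := by
  set m := 2 * δ with hm
  set A : X → ℝ := fun x => |W x| ^ m with hA
  set A' : X → ℝ := fun x => |u x| ^ m with hA'
  set B : X → ℝ := fun x => |W x - u x| with hB
  set C : X → ℝ := fun x => |χ x| with hC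
  have mA : Measurable A := hW.abs.pow_const m
  have mA' : Measurable A' := hu.abs.pow_const m
  have mB : Measurable B := (hW.sub hu).abs
  have mC : Measurable C := hχ.abs
  have hA0 : ∀ x, 0 ≤ A x := fun x => pow_nonneg (abs_nonneg _) _
  have hA'0 : ∀ x, 0 ≤ A' x := fun x => pow_nonneg (abs_nonneg _) _
  have hB0 : ∀ x, 0 ≤ B x := fun x => abs_nonneg _
  have hC0 : ∀ x, 0 ≤ C x := fun x => abs_nonneg _
  -- Integrability of (B*C)^2
  have hBC2 : Integrable (fun x => (B x * C x) ^ 2) μ := by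
    refine (hWu4.add hχ4).mono' ((mB.mul mC).pow_const 2).aestronglyMeasurable ?_
    filter_upwards with x
    simp only [Pi.add_apply]
    rw [Real.norm_eq_abs, abs_of_nonneg (sq_nonneg _)]
    show (B x * C x) ^ 2 ≤ B x ^ 4 + C x ^ 4
    nlinarith [sq_nonneg (B x ^ 2 - C x ^ 2), hB0 x, hC0 x, sq_nonneg (B x * C x)]
  -- Memℒp facts
  have hMemA : MemLp A 2 μ := (memLp_two_iff_integrable_sq mA.aestronglyMeasurable).mpr hW2
  have hMemA' : MemLp A' 2 μ := (memLp_two_iff_integrable_sq mA'.aestronglyMeasurable).mpr hu2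
  have hMemBC : MemLp (fun x => B x * C x) 2 μ :=
    (memLp_two_iff_integrable_sq (mB.mul mC).aestronglyMeasurable).mpr hBC2
  have hB4' : Integrable (fun x => (B x ^ 2) ^ 2) μ := by
    have : (fun x => (B x ^ 2) ^ 2) = fun x => B x ^ 4 := by funext x; ring
    rw [this]; exact hWu4
  have hC4' : Integrable (fun x => (C x ^ 2) ^ 2) μ := by
    have : (fun x => (C x ^ 2) ^ 2) = fun x => C x ^ 4 := by funext x; ring
    rw [this]; exact hχ4
  have hMemB2 : MemLp (fun x => B x ^ 2) 2 μ :=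
    (memLp_two_iff_integrable_sq (mB.pow_const 2).aestronglyMeasurable).mpr hB4'
  have hMemC2 : MemLp (fun x => C x ^ 2) 2 μ :=
    (memLp_two_iff_integrable_sq (mC.pow_const 2).aestronglyMeasurable).mpr hC4'
  have h22 : Real.HolderConjugate 2 2 := Real.HolderConjugate.two_two
  have hofReal : ENNReal.ofReal (2 : ℝ) = 2 := by
    rw [ENNReal.ofReal_ofNat]
  -- Product integrability via AM-GM domination
  have prod_int : ∀ (F : X → ℝ), Measurable F → (∀ x, 0 ≤ F x) →
      Integrable (fun x => F x ^ 2) μ → Integrable (fun x => F x * (B x * C x)) μ := by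
    intro F mF hF0 hF2
    refine (hF2.add hBC2).mono' (mF.mul (mB.mul mC)).aestronglyMeasurable ?_
    filter_upwards with x
    simp only [Pi.add_apply]
    rw [Real.norm_eq_abs,
      abs_of_nonneg (mul_nonneg (hF0 x) (mul_nonneg (hB0 x) (hC0 x)))]
    nlinarith [sq_nonneg (F x - B x * C x), hF0 x, mul_nonneg (hB0 x) (hC0 x)]
  have hABC_int : Integrable (fun x => A x * (B x * C x)) μ := prod_int A mA hA0 hW2
  have hA'BC_int : Integrable (fun x => A' x * (B x * C x)) μ := prod_int A' mA' hA'0 hu2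
  -- Hölder (2,2)
  have holder : ∀ (F G : X → ℝ), (∀ x, 0 ≤ F x) → (∀ x, 0 ≤ G x) →
      MemLp F 2 μ → MemLp G 2 μ →
      ∫ x, F x * G x ∂μ ≤ (∫ x, F x ^ (2:ℝ) ∂μ) ^ ((1:ℝ)/2) * (∫ x, G x ^ (2:ℝ) ∂μ) ^ ((1:ℝ)/2) := by
    intro F G hF0 hG0 hF hG
    have := MeasureTheory.integral_mul_le_Lp_mul_Lq_of_nonneg h22
      (Filter.Eventually.of_forall hF0) (Filter.Eventually.of_forall hG0)
      (hofReal ▸ hF) (hofReal ▸ hG)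
    simpa using this
  -- pointwise rpow two to pow two
  have rpow2 : ∀ (f : X → ℝ), (∫ x, f x ^ (2:ℝ) ∂μ) = ∫ x, f x ^ 2 ∂μ := by
    intro f; congr 1; funext x; rw [Real.rpow_two]
  -- the integrand and pointwise bound
  set F : X → ℝ := fun x => (W x ^ (2 * δ + 1) - u x ^ (2 * δ + 1)) * χ x with hF
  have key : ∀ x, |F x| ≤ ((m : ℝ) + 1) * ((A x + A' x) * (B x * C x)) := by
    intro x
    rw [hF, abs_mul]
    calc |W x ^ (2 * δ + 1) - u x ^ (2 * δ + 1)| * |χ x|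
        ≤ (((m : ℝ) + 1) * ((|W x| ^ m + |u x| ^ m) * |W x - u x|)) * |χ x| := by
          apply mul_le_mul_of_nonneg_right _ (abs_nonneg _)
          exact abs_pow_succ_sub_pow_succ_le (W x) (u x) m
      _ = ((m : ℝ) + 1) * ((A x + A' x) * (B x * C x)) := by ring
  have mF : Measurable F := (((hW.pow_const _).sub (hu.pow_const _)).mul hχ)
  -- integrability of F
  have hFint : Integrable F μ := by
    refine (((hABC_int.add hA'BC_int).const_mul ((m : ℝ) + 1))).mono'
      mF.aestronglyMeasurable ?_
    filter_upwards with x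
    rw [Real.norm_eq_abs]
    calc |F x| ≤ ((m : ℝ) + 1) * ((A x + A' x) * (B x * C x)) := key x
      _ = ((m : ℝ) + 1) * (A x * (B x * C x) + A' x * (B x * C x)) := by ring
  refine ⟨hFint, ?_⟩
  -- norms
  set LW := lpNormR μ 2 (fun x => |W x| ^ (2 * δ)) with hLW
  set Lu := lpNormR μ 2 (fun x => |u x| ^ (2 * δ)) with hLu
  set KB := lpNormR μ 4 (fun x => W x - u x) with hKB
  set KC := lpNormR μ 4 χ with hKC
  have hLW_eq : LW = (∫ x, A x ^ (2:ℝ) ∂μ) ^ ((1:ℝ)/2) := by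
    rw [hLW, lpNormR, rpow2]
    congr 1
    apply integral_congr_ae; filter_upwards with x
    rw [hA, abs_of_nonneg (pow_nonneg (abs_nonneg _) _)]
  have hLu_eq : Lu = (∫ x, A' x ^ (2:ℝ) ∂μ) ^ ((1:ℝ)/2) := by
    rw [hLu, lpNormR, rpow2]
    congr 1
    apply integral_congr_ae; filter_upwards with x
    rw [hA', abs_of_nonneg (pow_nonneg (abs_nonneg _) _)]
  have intB4_nonneg : 0 ≤ ∫ x, B x ^ 4 ∂μ :=
    integral_nonneg fun x => by positivity
  have intC4_nonneg : 0 ≤ ∫ x, C x ^ 4 ∂μ :=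
    integral_nonneg fun x => by positivity
  have hKB_eq : KB = (∫ x, B x ^ 4 ∂μ) ^ ((1:ℝ)/4) := by rw [hKB, lpNormR]; norm_num; rfl
  have hKC_eq : KC = (∫ x, C x ^ 4 ∂μ) ^ ((1:ℝ)/4) := by rw [hKC, lpNormR]; norm_num; rfl
  -- second Hölder : the BC factor
  have hK2 : (∫ x, (B x * C x) ^ (2:ℝ) ∂μ) ^ ((1:ℝ)/2) ≤ KB * KC := by
    have step : ∫ x, (B x * C x) ^ (2:ℝ) ∂μ ≤
        (∫ x, B x ^ 4 ∂μ) ^ ((1:ℝ)/2) * (∫ x, C x ^ 4 ∂μ) ^ ((1:ℝ)/2) := by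
      have h1 : ∫ x, (B x * C x) ^ (2:ℝ) ∂μ = ∫ x, (B x ^ 2) * (C x ^ 2) ∂μ := by
        rw [rpow2]; congr 1; funext x; ring
      have h2 := holder (fun x => B x ^ 2) (fun x => C x ^ 2)
        (fun x => by positivity) (fun x => by positivity) hMemB2 hMemC2
      rw [h1]
      calc ∫ x, (B x ^ 2) * (C x ^ 2) ∂μ
          ≤ (∫ x, (B x ^ 2) ^ (2:ℝ) ∂μ) ^ ((1:ℝ)/2) * (∫ x, (C x ^ 2) ^ (2:ℝ) ∂μ) ^ ((1:ℝ)/2) := h2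
        _ = (∫ x, B x ^ 4 ∂μ) ^ ((1:ℝ)/2) * (∫ x, C x ^ 4 ∂μ) ^ ((1:ℝ)/2) := by
            rw [rpow2, rpow2]
            congr 2 <;> · apply integral_congr_ae; filter_upwards with x; ring_nf
    have hnn : (0:ℝ) ≤ (∫ x, B x ^ 4 ∂μ) ^ ((1:ℝ)/2) * (∫ x, C x ^ 4 ∂μ) ^ ((1:ℝ)/2) := by
      positivity
    calc (∫ x, (B x * C x) ^ (2:ℝ) ∂μ) ^ ((1:ℝ)/2)
        ≤ ((∫ x, B x ^ 4 ∂μ) ^ ((1:ℝ)/2) * (∫ x, C x ^ 4 ∂μ) ^ ((1:ℝ)/2)) ^ ((1:ℝ)/2) := by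
          apply Real.rpow_le_rpow _ step (by norm_num)
          exact integral_nonneg fun x => Real.rpow_nonneg (by positivity) _
      _ = KB * KC := by
          rw [Real.mul_rpow (Real.rpow_nonneg intB4_nonneg _) (Real.rpow_nonneg intC4_nonneg _),
            ← Real.rpow_mul intB4_nonneg, ← Real.rpow_mul intC4_nonneg, hKB_eq, hKC_eq]
          norm_num
  -- main chain
  have main : |∫ x, F x ∂μ| ≤ ((m:ℝ) + 1) * ((LW + Lu) * (KB * KC)) := by
    have habs : |∫ x, F x ∂μ| ≤ ∫ x, |F x| ∂μ := by
      simpa [Real.norm_eq_abs] using norm_integral_le_integral_norm (μ := μ) F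
    have hmono : ∫ x, |F x| ∂μ ≤
        ∫ x, ((m:ℝ) + 1) * (A x * (B x * C x) + A' x * (B x * C x)) ∂μ := by
      apply integral_mono hFint.abs (((hABC_int.add hA'BC_int).const_mul _))
      intro x
      calc |F x| ≤ ((m : ℝ) + 1) * ((A x + A' x) * (B x * C x)) := key x
        _ = ((m : ℝ) + 1) * (A x * (B x * C x) + A' x * (B x * C x)) := by ring
    have hsplit : ∫ x, ((m:ℝ) + 1) * (A x * (B x * C x) + A' x * (B x * C x)) ∂μ =
        ((m:ℝ) + 1) * ((∫ x, A x * (B x * C x) ∂μ) + ∫ x, A' x * (B x * C x) ∂μ) := by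
      rw [integral_const_mul, integral_add hABC_int hA'BC_int]
    have hhold1 := holder A (fun x => B x * C x) hA0
      (fun x => mul_nonneg (hB0 x) (hC0 x)) hMemA hMemBC
    have hhold2 := holder A' (fun x => B x * C x) hA'0
      (fun x => mul_nonneg (hB0 x) (hC0 x)) hMemA' hMemBC
    have hKnn : (0:ℝ) ≤ (∫ x, (B x * C x) ^ (2:ℝ) ∂μ) ^ ((1:ℝ)/2) :=
      Real.rpow_nonneg (integral_nonneg fun x => Real.rpow_nonneg (by positivity) _) _
    have hLWnn : 0 ≤ LW := by rw [hLW_eq]; positivity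
    have hLunn : 0 ≤ Lu := by rw [hLu_eq]; positivity
    calc |∫ x, F x ∂μ| ≤ ∫ x, |F x| ∂μ := habs
      _ ≤ ((m:ℝ) + 1) * ((∫ x, A x * (B x * C x) ∂μ) + ∫ x, A' x * (B x * C x) ∂μ) := by
          rw [← hsplit]; exact hmono
      _ ≤ ((m:ℝ) + 1) * ((LW + Lu) * (∫ x, (B x * C x) ^ (2:ℝ) ∂μ) ^ ((1:ℝ)/2)) := by
          apply mul_le_mul_of_nonneg_left _ (by positivity)
          rw [hLW_eq, hLu_eq, add_mul]
          exact add_le_add hhold1 hhold2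
      _ ≤ ((m:ℝ) + 1) * ((LW + Lu) * (KB * KC)) := by
          apply mul_le_mul_of_nonneg_left _ (by positivity)
          exact mul_le_mul_of_nonneg_left hK2 (by linarith)
  -- conclude, absorbing the 2^(2δ-1) factor
  have hLWnn : 0 ≤ LW := by rw [hLW_eq]; positivity
  have hLunn : 0 ≤ Lu := by rw [hLu_eq]; positivity
  have hKBnn : 0 ≤ KB := by rw [hKB_eq]; positivity
  have hKCnn : 0 ≤ KC := by rw [hKC_eq]; positivity
  have hcoef : ((m:ℝ) + 1) ≤ 2 ^ (2 * δ - 1) * (2 * (δ:ℝ) + 1) := by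
    have h1 : (1:ℝ) ≤ 2 ^ (2 * δ - 1) := one_le_pow₀ (by norm_num)
    have h2 : ((m:ℝ) + 1) = 2 * (δ:ℝ) + 1 := by rw [hm]; push_cast; ring
    rw [h2]
    nlinarith [h1, Nat.cast_nonneg (α := ℝ) δ]
  calc |∫ x, F x ∂μ| ≤ ((m:ℝ) + 1) * ((LW + Lu) * (KB * KC)) := main
    _ ≤ (2 ^ (2 * δ - 1) * (2 * (δ:ℝ) + 1)) * ((LW + Lu) * (KB * KC)) := by
        exact mul_le_mul_of_nonneg_right hcoef
          (mul_nonneg (add_nonneg hLWnn hLunn) (mul_nonneg hKBnn hKCnn))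
    _ = 2 ^ (2 * δ - 1) * (2 * (δ:ℝ) + 1) * (LW + Lu) * KB * KC := by ring
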